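/- Let u and v be nonnegative measurable functions on a finite-measure set Ω such that u and v are equidistributed (have the same distribution function), and let I : [0, |Ω|] → [0, ∞) be nondecreasing. Then the increasing rearrangement of the composition I ∘ μ_u ∘ u satisfies (I ∘ μ_u ∘ u)_*(r) ≥ I(r) for r ∈ (0, |Ω|), where μ_u is the distribution function of u. -/

import Mathlib

open MeasureTheory ENNReal

/-- The decreasing rearrangement of a measurable function `u` with respect to a
measure `μ`: `u*(s) = sup { t ≥ 0 : μ({|u| ≥ t}) ≥ s }`. -/
noncomputable def decRearr {α : Type*} [MeasurableSpace α] (μ : Measure α)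
    (u : α → ℝ) (s : ℝ) : ℝ≥0∞ :=
  sSup {t : ℝ≥0∞ | ENNReal.ofReal s ≤ μ {x | t ≤ ENNReal.ofReal |u x|}}

/-- Key lemma: the set where the distribution function composed with `u` is
below `c` has measure at most `c`. -/
lemma key_dist_lemma {α : Type*} [MeasurableSpace α] (μ : Measure α)
    (u : α → ℝ) (hunn : ∀ x, 0 ≤ u x) (c : ℝ≥0∞) :
    μ {x | μ {y | u x ≤ u y} < c} ≤ c := by
  set S : Set ℝ := {t | 0 ≤ t ∧ μ {y | t ≤ u y} < c} with hS
  have hup : ∀ s ∈ S, ∀ t, s ≤ t → μ {y | t ≤ u y} < c := by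
    intro s hs t hst
    exact lt_of_le_of_lt (measure_mono fun y hy => le_trans hst hy) hs.2
  have hA : {x | μ {y | u x ≤ u y} < c} = {x | u x ∈ S} := by
    ext x; simp only [Set.mem_setOf_eq, hS]
    exact ⟨fun h => ⟨hunn x, h⟩, fun h => h.2⟩
  rw [hA]
  rcases Set.eq_empty_or_nonempty S with hSe | hSne
  · simp [hSe]
  have hbdd : BddBelow S := ⟨0, fun s hs => hs.1⟩
  set t₀ := sInf S with ht₀
  by_cases h0 : μ {y | t₀ ≤ u y} < c
  · calc μ {x | u x ∈ S} ≤ μ {x | t₀ ≤ u x} :=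
          measure_mono fun x hx => csInf_le hbdd hx
      _ ≤ c := h0.le
  · -- t₀ is not in S (as regards measure condition); use approximation from above
    have hsub : {x | u x ∈ S} ⊆ ⋃ n : ℕ, {x | t₀ + 1 / (n + 1) ≤ u x} := by
      intro x hx
      have h1 : t₀ ≤ u x := csInf_le hbdd hx
      have h2 : t₀ < u x := by
        rcases lt_or_eq_of_le h1 with h | h
        · exact h
        · exact absurd (h ▸ hx.2) h0
      obtain ⟨n, hn⟩ := exists_nat_one_div_lt (sub_pos.mpr h2)
      exact Set.mem_iUnion.mpr ⟨n, by simp only [Set.mem_setOf_eq]; linarith⟩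
    have hmono : Monotone fun n : ℕ => {x | t₀ + 1 / (n + 1 : ℝ) ≤ u x} := by
      intro m n hmn x hx
      have : (1 : ℝ) / (n + 1) ≤ 1 / (m + 1) := by
        apply one_div_le_one_div_of_le
        · positivity
        · have : (m:ℝ) ≤ n := Nat.cast_le.mpr hmn
          linarith
      simp only [Set.mem_setOf_eq] at hx ⊢
      linarith
    calc μ {x | u x ∈ S} ≤ μ (⋃ n : ℕ, {x | t₀ + 1 / (n + 1 : ℝ) ≤ u x}) :=
          measure_mono hsub
      _ = ⨆ n : ℕ, μ {x | t₀ + 1 / (n + 1 : ℝ) ≤ u x} :=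
          hmono.directed_le.measure_iUnion
      _ ≤ c := by
          apply iSup_le
          intro n
          have hlt : t₀ < t₀ + 1 / (n + 1 : ℝ) := by
            have : (0 : ℝ) < 1 / (n + 1) := by positivity
            linarith
          obtain ⟨s, hsS, hs⟩ := exists_lt_of_csInf_lt hSne hlt
          exact (hup s hsS _ hs.le).le

/-- If `u` and `v` are equidistributed nonnegative measurable functions and `I`
is nondecreasing, then the increasing rearrangement of `I ∘ μ_u ∘ u` satisfies
`(I ∘ μ_u ∘ u)_*(r) ≥ I(r)`, where the increasing rearrangement of `w` is
`w_*(r) = w*(|Ω| − r)`. -/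
theorem increasing_rearrangement_composition {α : Type*} [MeasurableSpace α]
    (μ : Measure α) [IsFiniteMeasure μ] (u v : α → ℝ)
    (hu : Measurable u) (hv : Measurable v)
    (hunn : ∀ x, 0 ≤ u x) (hvnn : ∀ x, 0 ≤ v x)
    (hequi : ∀ t : ℝ, μ {x | t ≤ u x} = μ {x | t ≤ v x})
    (I : ℝ → ℝ) (hI : MonotoneOn I (Set.Icc 0 (μ Set.univ).toReal))
    (hInn : ∀ r, 0 ≤ I r) :
    ∀ r ∈ Set.Ioo (0 : ℝ) (μ Set.univ).toReal,
      ENNReal.ofReal (I r) ≤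
        decRearr μ (fun x => I ((μ {y | u x ≤ u y}).toReal))
          ((μ Set.univ).toReal - r) := by
  intro r hr
  obtain ⟨hr0, hrT⟩ := hr
  set T := (μ Set.univ).toReal with hT
  apply le_sSup
  show ENNReal.ofReal (T - r) ≤
    μ {x | ENNReal.ofReal (I r) ≤ ENNReal.ofReal |I ((μ {y | u x ≤ u y}).toReal)|}
  set B : Set α := {x | μ {y | u x ≤ u y} < ENNReal.ofReal r} with hB
  have hBc : Bᶜ ⊆
      {x | ENNReal.ofReal (I r) ≤ ENNReal.ofReal |I ((μ {y | u x ≤ u y}).toReal)|} := by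
    intro x hx
    simp only [hB, Set.mem_compl_iff, Set.mem_setOf_eq, not_lt] at hx
    set m := (μ {y | u x ≤ u y}).toReal with hm
    have hfin : μ {y | u x ≤ u y} ≠ ⊤ := measure_ne_top μ _
    have hrm : r ≤ m := by
      have := ENNReal.toReal_mono hfin hx
      rwa [ENNReal.toReal_ofReal hr0.le] at this
    have hmT : m ≤ T := ENNReal.toReal_mono (measure_ne_top μ _)
      (measure_mono (Set.subset_univ _))
    have hle : I r ≤ I m :=
      hI ⟨hr0.le, hrT.le⟩ ⟨le_trans hr0.le hrm, hmT⟩ hrm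
    simp only [Set.mem_setOf_eq, abs_of_nonneg (hInn m)]
    exact ENNReal.ofReal_le_ofReal (by rw [abs_of_nonneg (hInn _)]; exact hle)
  have hkey : μ B ≤ ENNReal.ofReal r := key_dist_lemma μ u hunn _
  have huniv : μ Set.univ ≤ ENNReal.ofReal r + μ Bᶜ := by
    calc μ Set.univ = μ (B ∪ Bᶜ) := by rw [Set.union_compl_self]
      _ ≤ μ B + μ Bᶜ := measure_union_le _ _
      _ ≤ ENNReal.ofReal r + μ Bᶜ := add_le_add_left hkey _
  have h1 : ENNReal.ofReal (T - r) ≤ μ Bᶜ := by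
    rw [ENNReal.ofReal_sub _ hr0.le, hT, ENNReal.ofReal_toReal (measure_ne_top μ _)]
    exact tsub_le_iff_left.mpr huniv
  exact le_trans h1 (measure_mono hBc)
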